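/- Let J be a set of prime numbers, let M be the submonoid of ℤ generated by J, and let n be a positive integer. If the product ring (Localization of ℤ at M) × ℤ/nℤ is solid, i.e. the multiplication-induced ℤ-linear map from its tensor square over ℤ to itself is bijective, then every prime factor of n belongs to J. -/

import Mathlib

open scoped TensorProduct

/-- Let `J` be a set of primes, `M` the submonoid of `ℤ` generated by `J`, and
`n` a positive integer.  If the product ring `(Localization of ℤ at M) × ℤ/nℤ`
is solid, then every prime factor of `n` belongs to `J`. -/
theorem prime_factors_mem_of_localization_prod_zmod_solid
    (J : Set ℕ) (hJ : ∀ p ∈ J, Nat.Prime p) (n : ℕ) (hn : 0 < n)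
    (hsolid : Function.Bijective (LinearMap.mul' ℤ
      (Localization (Submonoid.closure ((Nat.cast : ℕ → ℤ) '' J)) × ZMod n))) :
    ∀ p : ℕ, p.Prime → p ∣ n → p ∈ J := by
  intro p hp hpn
  set M := Submonoid.closure ((Nat.cast : ℕ → ℤ) '' J) with hMdef
  set R := Localization M with hRdef
  -- Step 1: the pure tensor (1,0) ⊗ (0,1) vanishes
  have h1 : ((1,0) : R × ZMod n) ⊗ₜ[ℤ] ((0,1) : R × ZMod n) = 0 := by
    apply hsolid.injective
    simp [LinearMap.mul'_apply]
  -- Step 2: 1 ⊗ 1 = 0 in R ⊗ ZMod n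
  have h2 : (1 : R) ⊗ₜ[ℤ] (1 : ZMod n) = (0 : R ⊗[ℤ] ZMod n) := by
    have := congrArg
      (TensorProduct.map (LinearMap.fst ℤ R (ZMod n)) (LinearMap.snd ℤ R (ZMod n))) h1
    simpa using this
  -- Step 3: n is a unit in R
  have hnI : ((n : ℤ) : R) ∈ Ideal.span {((n : ℤ) : R)} :=
    Ideal.subset_span rfl
  set I : Ideal R := Ideal.span {((n : ℤ) : R)} with hIdef
  have hfn : ((Ideal.Quotient.mk I).toAddMonoidHom.comp (Int.castAddHom R)) (n : ℤ) = 0 := by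
    simpa using (Ideal.Quotient.eq_zero_iff_mem).mpr hnI
  set g : ZMod n →+ R ⧸ I :=
    ZMod.lift n ⟨(Ideal.Quotient.mk I).toAddMonoidHom.comp (Int.castAddHom R), hfn⟩ with hgdef
  have hg1 : g 1 = 1 := by
    have : ((1 : ℤ) : ZMod n) = 1 := by push_cast; ring
    rw [← this, hgdef, ZMod.lift_coe]
    simp
  have h3 : (1 : R ⧸ I) = 0 := by
    have h := congrArg (TensorProduct.lift
      (LinearMap.mk₂ ℤ (fun r a => Ideal.Quotient.mk I r * g a)
        (fun r r' a => by rw [map_add, add_mul])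
        (fun c r a => by rw [map_zsmul, smul_mul_assoc])
        (fun r a a' => by rw [map_add, mul_add])
        (fun c r a => by rw [map_zsmul, mul_smul_comm]))) h2
    rw [map_zero, TensorProduct.lift.tmul, LinearMap.mk₂_apply, map_one, hg1, one_mul] at h
    exact h
  have h4 : (1 : R) ∈ I := by
    rwa [← Ideal.Quotient.eq_zero_iff_mem, map_one]
  have hdvd : (((n : ℤ)) : R) ∣ 1 := (Ideal.mem_span_singleton).mp h4
  have hnunit : IsUnit (((n : ℤ)) : R) := isUnit_of_dvd_one hdvd
  -- Step 4: p is a unit in R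
  have hpd : (((p : ℤ)) : R) ∣ (((n : ℤ)) : R) := by
    have : (p : ℤ) ∣ (n : ℤ) := Int.natCast_dvd_natCast.mpr hpn
    exact_mod_cast map_dvd (Int.castRingHom R) this
  have hpunit : IsUnit (((p : ℤ)) : R) := isUnit_of_dvd_unit hpd hnunit
  -- Step 5: p unit in the localization implies p ∈ J
  have hMne : ∀ m ∈ M, m ≠ 0 := by
    intro m hm
    induction hm using Submonoid.closure_induction with
    | mem x hx =>
      obtain ⟨q, hq, rfl⟩ := hx
      exact_mod_cast (hJ q hq).ne_zero
    | one => exact one_ne_zero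
    | mul x y hx hy ihx ihy => exact mul_ne_zero ihx ihy
  have hle : M ≤ nonZeroDivisors ℤ := fun m hm =>
    mem_nonZeroDivisors_of_ne_zero (hMne m hm)
  have hinj : Function.Injective (algebraMap ℤ R) := IsLocalization.injective R hle
  obtain ⟨r, hr⟩ := hpunit.exists_right_inv
  obtain ⟨⟨a, s⟩, hs⟩ := IsLocalization.surj (M := M) (S := R) r
  have key : algebraMap ℤ R ((p : ℤ) * a) = algebraMap ℤ R (s : ℤ) := by
    have hcast : (((p : ℤ)) : R) = algebraMap ℤ R (p : ℤ) := by
      simp [algebraMap_int_eq]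
    calc algebraMap ℤ R ((p : ℤ) * a) = algebraMap ℤ R (p : ℤ) * algebraMap ℤ R a := by
          rw [map_mul]
      _ = algebraMap ℤ R (p : ℤ) * (r * algebraMap ℤ R (s : ℤ)) := by rw [hs]
      _ = (((p : ℤ)) : R) * r * algebraMap ℤ R (s : ℤ) := by rw [hcast]; ring
      _ = algebraMap ℤ R (s : ℤ) := by rw [hr, one_mul]
  have hps : (p : ℤ) ∣ (s : ℤ) := ⟨a, (hinj key).symm⟩
  -- every element of M divisible by p forces p ∈ J
  have hpprime : Prime (p : ℤ) := Nat.prime_iff_prime_int.mp hp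
  have hsM : (s : ℤ) ∈ M := s.2
  have claim : ∀ m ∈ M, (p : ℤ) ∣ m → p ∈ J := by
    intro m hm
    induction hm using Submonoid.closure_induction with
    | mem x hx =>
      intro hdvd
      obtain ⟨q, hq, rfl⟩ := hx
      have : p ∣ q := Int.natCast_dvd_natCast.mp hdvd
      rwa [((hJ q hq).eq_one_or_self_of_dvd p this).resolve_left hp.ne_one]
    | one =>
      intro hdvd
      exact absurd (Nat.dvd_one.mp (Int.natCast_dvd_natCast.mp (by exact_mod_cast hdvd)))
        hp.ne_one
    | mul x y hx hy ihx ihy =>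
      intro hdvd
      rcases hpprime.dvd_mul.mp hdvd with h | h
      · exact ihx h
      · exact ihy h
  exact claim (s : ℤ) s.2 hps
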